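/- Let M, K be real symmetric positive semidefinite n×n matrices with M positive definite, and Δt > 0 such that M - (Δt²/4) K is positive definite. Then for any sequence (P^n) in ℝⁿ, the quadratic form E^{n+1/2} = ½( ‖(P^{n+1}-P^n)/Δt‖²_M + ⟨K P^n, P^{n+1}⟩ ) is nonnegative. (Hint: writing P^n = I - (Δt/2)D and P^{n+1} = I + (Δt/2)D with I = (P^{n+1}+P^n)/2, D = (P^{n+1}-P^n)/Δt, one gets E = ½(‖D‖²_{M - (Δt²/4)K} + ‖I‖²_K).) -/

import Mathlib

open Matrix

/-- If `M` is positive definite, `K` positive semidefinite and `M - (Δt²/4)K` is positive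
definite, then the discrete leapfrog energy
`½(‖(q - p)/Δt‖²_M + ⟨K p, q⟩)` is nonnegative for all vectors `p, q`. -/
theorem leapfrog_energy_nonneg
    {d : ℕ} (M K : Matrix (Fin d) (Fin d) ℝ)
    (hM : M.PosDef) (hK : K.PosSemidef) (Δt : ℝ) (hΔt : 0 < Δt)
    (hCFL : (M - (Δt ^ 2 / 4) • K).PosDef) :
    ∀ p q : Fin d → ℝ,
      0 ≤ (1 / 2) *
        ((M.mulVec (Δt⁻¹ • (q - p)) ⬝ᵥ (Δt⁻¹ • (q - p))) + (K.mulVec p ⬝ᵥ q)) := by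
  intro p q
  have hKt : Kᵀ = K := by
    rw [← Matrix.conjTranspose_eq_transpose_of_trivial, hK.isHermitian.eq]
  have hMt : Mᵀ = M := by
    rw [← Matrix.conjTranspose_eq_transpose_of_trivial, hM.isHermitian.eq]
  have symm : ∀ (A : Matrix (Fin d) (Fin d) ℝ), Aᵀ = A →
      ∀ x y : Fin d → ℝ, A.mulVec x ⬝ᵥ y = A.mulVec y ⬝ᵥ x := by
    intro A hA x y
    rw [dotProduct_comm, dotProduct_mulVec, ← Matrix.mulVec_transpose, hA,
      dotProduct_comm]
  have h1 := hCFL.posSemidef.dotProduct_mulVec_nonneg (Δt⁻¹ • (q - p))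
  have h2 := hK.dotProduct_mulVec_nonneg ((1/2 : ℝ) • (p + q))
  simp only [star_trivial, Matrix.sub_mulVec, Matrix.smul_mulVec,
    Matrix.mulVec_add, Matrix.mulVec_smul, Matrix.mulVec_sub,
    add_dotProduct, sub_dotProduct, smul_dotProduct, dotProduct_smul,
    dotProduct_add, dotProduct_sub, smul_eq_mul] at h1 h2 ⊢
  have hne : Δt ≠ 0 := ne_of_gt hΔt
  field_simp at h1 h2 ⊢
  simp only [zero_mul] at h1 h2 ⊢
  rw [dotProduct_comm (M *ᵥ q) q, dotProduct_comm (M *ᵥ p) q,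
    dotProduct_comm (M *ᵥ q) p, dotProduct_comm (M *ᵥ p) p,
    dotProduct_comm (K *ᵥ p) q]
  have e1 : q ⬝ᵥ M *ᵥ p = p ⬝ᵥ M *ᵥ q := by
    rw [dotProduct_comm q, dotProduct_comm p, symm M hMt p q]
  have e2 : q ⬝ᵥ K *ᵥ p = p ⬝ᵥ K *ᵥ q := by
    rw [dotProduct_comm q, dotProduct_comm p, symm K hKt p q]
  rw [e1] at h1 ⊢
  rw [e2] at h1 h2
  nlinarith [mul_nonneg (sq_nonneg Δt) h2]
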